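/- Let G be an l×m matrix with entries in the polynomial ring F[z] over a field F, and let S ⊆ {1, ..., m} be a set of column indices. Then the map sending a causal sequence u : ℤ → F^m that is supported on S (i.e., u_i[n] = 0 for all n whenever i ∉ S) to the sequence G(z)u is injective if and only if the columns of G indexed by S are linearly independent over F[z]. Consequently, for a partition of the columns of G into groups G_{s_1}, ..., G_{s_r} (one group of R_s columns per source s) and a tuple of integers (R'_s) with R'_s ≤ R_s, there exists for each s a set S_s of R'_s column indices within group s such that the map on causal inputs supported on ∪_s S_s is injective, if and only if for each s there exist R'_s columns of G_s whose union over all s is a linearly independent set over F[z]. -/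

import Mathlib

open Polynomial Finset Matrix

/-- The action of the time-shift operator of a polynomial matrix `G(z)` on a
vector-valued sequence: `(G(z)u)[n]_i = Σ_j Σ_k (G i j).coeff k * u[n+k]_j`. -/
def matShift {F : Type*} [Field F] {p q : ℕ} (G : Matrix (Fin p) (Fin q) (Polynomial F))
    (u : ℤ → Fin q → F) (n : ℤ) : Fin p → F :=
  fun i => ∑ j, (G i j).sum fun k a => a * u (n + k) j

noncomputable def tK (F : Type*) [Field F] : LaurentSeries F := HahnSeries.single (-1 : ℤ) 1

theorem hahn_coeff_sum {Γ R : Type*} [PartialOrder Γ] [AddCommMonoid R] {ι : Type*}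
    (s : Finset ι) (f : ι → HahnSeries Γ R) (g : Γ) :
    (∑ i ∈ s, f i).coeff g = ∑ i ∈ s, (f i).coeff g :=
  map_sum (HahnSeries.coeff.addMonoidHom g) f s

theorem algebraMap_LS {F : Type*} [Field F] (a : F) :
    (algebraMap F (LaurentSeries F)) a = HahnSeries.single (0:ℤ) a := by
  rw [show (algebraMap F (LaurentSeries F)) a
      = HahnSeries.ofPowerSeries ℤ F (algebraMap F (PowerSeries F) a) from rfl]
  rw [PowerSeries.algebraMap_apply]
  simp [HahnSeries.ofPowerSeries_C, HahnSeries.C_apply]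

theorem aeval_tK_eq {F : Type*} [Field F] (p : F[X]) :
    (aeval (tK F)) p = p.sum fun e a => HahnSeries.single (-(e:ℤ)) a := by
  rw [aeval_def, eval₂_eq_sum]
  refine Finset.sum_congr rfl fun e he => ?_
  beta_reduce
  rw [tK, HahnSeries.single_pow, algebraMap_LS, HahnSeries.single_mul_single]
  simp

theorem coeff_aeval_tK {F : Type*} [Field F] (p : F[X]) (k : ℕ) :
    ((aeval (tK F)) p).coeff (-(k:ℤ)) = p.coeff k := by
  rw [aeval_tK_eq, Polynomial.sum_def, hahn_coeff_sum]
  simp only [HahnSeries.coeff_single, neg_inj, Int.natCast_inj]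
  rw [Finset.sum_ite_eq p.support k fun n => p.coeff n]
  by_cases h : k ∈ p.support
  · simp [h]
  · simp [h, Polynomial.notMem_support_iff.mp h]

theorem aeval_tK_injective {F : Type*} [Field F] :
    Function.Injective (fun p : F[X] => (aeval (tK F)) p) := by
  intro p q h
  ext k
  have := congrArg (fun x : LaurentSeries F => x.coeff (-(k:ℤ))) h
  simpa [coeff_aeval_tK] using this

theorem aeval_tK_mul_coeff {F : Type*} [Field F] (p : F[X]) (U : LaurentSeries F) (d : ℤ) :
    ((aeval (tK F)) p * U).coeff d = p.sum fun e a => a * U.coeff (d + e) := by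
  rw [aeval_tK_eq, Polynomial.sum_def, Polynomial.sum_def, Finset.sum_mul, hahn_coeff_sum]
  refine Finset.sum_congr rfl fun e he => ?_
  have h := HahnSeries.coeff_single_mul_add (r := p.coeff e) (x := U) (a := d + (e:ℤ)) (b := -(e:ℤ))
  rw [add_neg_cancel_right] at h
  exact h

set_option maxHeartbeats 1000000 in
set_option synthInstance.maxHeartbeats 400000 in
theorem li_map_field {F : Type*} [Field F] {l : ℕ} {ι : Type*} [Fintype ι]
    {K : Type*} [Field K] (φ : Polynomial F →+* K) (hφ : Function.Injective φ)
    (v : ι → Fin l → Polynomial F) (hv : LinearIndependent (Polynomial F) v) :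
    LinearIndependent K (fun j => fun i => φ (v j i)) := by
  classical
  let f : (Fin l → Polynomial F) →ₗ[Polynomial F] (Fin l → RatFunc F) :=
    LinearMap.pi fun i => (Algebra.linearMap (Polynomial F) (RatFunc F)).comp (LinearMap.proj i)
  have hf : LinearMap.ker f = ⊥ := by
    rw [LinearMap.ker_eq_bot]
    intro x y h
    funext i
    exact IsFractionRing.injective (Polynomial F) (RatFunc F) (congrFun h i)
  have hv1 : LinearIndependent (Polynomial F) (f ∘ v) := hv.map' f hf
  have hv2 : LinearIndependent (RatFunc F) (f ∘ v) :=
    LinearIndependent.localization (RatFunc F) (nonZeroDivisors (Polynomial F)) hv1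
  set v1 : ι → Fin l → RatFunc F := f ∘ v with hv1def
  have hv1app : ∀ j i, v1 j i = algebraMap (Polynomial F) (RatFunc F) (v j i) := fun j i => rfl
  let T : (ι → RatFunc F) →ₗ[RatFunc F] (Fin l → RatFunc F) :=
    { toFun := fun c => ∑ j, c j • v1 j
      map_add' := by intro a b; simp [add_smul, Finset.sum_add_distrib]
      map_smul' := by intro a c; simp [smul_smul, Finset.smul_sum] }
  have hT : LinearMap.ker T = ⊥ := by
    rw [LinearMap.ker_eq_bot']
    intro c hc
    funext j
    exact Fintype.linearIndependent_iff.mp hv2 c (by exact hc) j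
  obtain ⟨L, hL⟩ := T.exists_leftInverse_of_injective hT
  have hTsingle : ∀ j : ι, T (Pi.single j 1) = v1 j := by
    intro j
    have h0 : T (Pi.single j 1)
        = ∑ j', ((Pi.single j (1 : RatFunc F) : ι → RatFunc F) j') • v1 j' := by
      simp only [T, LinearMap.coe_mk, AddHom.coe_mk]
    rw [h0, Finset.sum_eq_single j (fun b _ hb => by simp [Pi.single_apply, hb]) (by simp)]
    simp
  have hLv : ∀ j : ι, L (v1 j) = Pi.single j 1 := by
    intro j
    rw [← hTsingle j]
    exact congrFun (congrArg (fun g => g.toFun) hL) (Pi.single j 1)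
  let e : Fin l → (Fin l → RatFunc F) := fun i => fun j => if i = j then 1 else 0
  have hdelta : ∀ j j' : ι, ∑ i, v1 j i * L (e i) j' = if j' = j then 1 else 0 := by
    intro j j'
    have h1 : L (v1 j) = ∑ i, v1 j i • L (e i) := by
      conv_lhs => rw [pi_eq_sum_univ (v1 j)]
      rw [map_sum]
      exact Finset.sum_congr rfl fun i _ => by rw [_root_.map_smul]
    have h2 := congrFun h1 j'
    rw [hLv] at h2
    simp only [Finset.sum_apply, Pi.smul_apply, smul_eq_mul] at h2
    rw [← h2, Pi.single_apply]
  set ψ : RatFunc F →+* K := IsFractionRing.lift (A := Polynomial F) (g := φ) hφ with hψdef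
  have hψv1 : ∀ j i, ψ (v1 j i) = φ (v j i) := by
    intro j i
    rw [hv1app]
    exact IsFractionRing.lift_algebraMap hφ _
  rw [Fintype.linearIndependent_iff]
  intro c hc j'
  have hci : ∀ i : Fin l, ∑ j, c j * φ (v j i) = 0 := by
    intro i
    have := congrFun hc i
    simpa [Finset.sum_apply] using this
  calc c j' = ∑ j, c j * ψ (if j' = j then 1 else 0) := by
        simp [apply_ite ψ, mul_ite, Finset.sum_ite_eq]
    _ = ∑ j, c j * ψ (∑ i, v1 j i * L (e i) j') := by
        refine Finset.sum_congr rfl fun j _ => by rw [hdelta j j']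
    _ = ∑ j, ∑ i, c j * (φ (v j i) * ψ (L (e i) j')) := by
        refine Finset.sum_congr rfl fun j _ => ?_
        rw [map_sum, Finset.mul_sum]
        refine Finset.sum_congr rfl fun i _ => ?_
        rw [_root_.map_mul, hψv1]
    _ = ∑ i, ψ (L (e i) j') * ∑ j, c j * φ (v j i) := by
        rw [Finset.sum_comm]
        refine Finset.sum_congr rfl fun i _ => ?_
        rw [Finset.mul_sum]
        refine Finset.sum_congr rfl fun j _ => by ring
    _ = 0 := by simp [hci]

theorem sum_coeff_shift {F : Type*} [Field F] (p q : Polynomial F) (d : ℤ) :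
    (p.sum fun k a => a * (if (k:ℤ) ≤ d then q.coeff (d - k).toNat else 0)) =
      (if 0 ≤ d then (p*q).coeff d.toNat else 0) := by
  by_cases hd : 0 ≤ d
  · obtain ⟨D, rfl⟩ : ∃ D : ℕ, d = (D:ℤ) := ⟨d.toNat, (Int.toNat_of_nonneg hd).symm⟩
    rw [if_pos hd, Int.toNat_natCast, Polynomial.coeff_mul,
      Finset.Nat.sum_antidiagonal_eq_sum_range_succ_mk, Polynomial.sum_def]
    have key : ∀ k : ℕ, p.coeff k * (if (k:ℤ) ≤ (D:ℤ) then q.coeff ((D:ℤ) - (k:ℤ)).toNat else 0)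
        = if k ≤ D then p.coeff k * q.coeff (D - k) else 0 := by
      intro k
      by_cases h : k ≤ D
      · rw [if_pos (by exact_mod_cast h), if_pos h]
        congr 2
        omega
      · rw [if_neg (by exact_mod_cast h), if_neg h, mul_zero]
    calc (∑ k ∈ p.support, p.coeff k * (if (k:ℤ) ≤ (D:ℤ) then q.coeff ((D:ℤ) - (k:ℤ)).toNat else 0))
        = ∑ k ∈ p.support, (if k ≤ D then p.coeff k * q.coeff (D - k) else 0) :=
          Finset.sum_congr rfl fun k _ => key k
      _ = ∑ k ∈ p.support.filter (fun k => k ≤ D), p.coeff k * q.coeff (D - k) :=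
          (Finset.sum_filter _ _).symm
      _ = ∑ k ∈ Finset.range (D+1), p.coeff k * q.coeff (D - k) := by
          refine Finset.sum_subset (fun k hk => ?_) (fun k hk hk' => ?_)
          · rw [Finset.mem_filter] at hk
            rw [Finset.mem_range]
            omega
          · have : k ∉ p.support := by
              intro hs
              exact hk' (Finset.mem_filter.mpr ⟨hs, by rw [Finset.mem_range] at hk; omega⟩)
            rw [Polynomial.notMem_support_iff.mp this, zero_mul]
  · rw [if_neg hd, Polynomial.sum_def]
    apply Finset.sum_eq_zero
    intro k hk
    rw [if_neg (by omega), mul_zero]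

set_option maxHeartbeats 1000000
set_option synthInstance.maxHeartbeats 400000

/-- (a) for a set `S` of column indices, the map `u ↦ G(z)u` on
causal sequences supported on `S` is injective iff the columns of `G` indexed
by `S` are linearly independent over `F[z]`; (b) consequently, for a partition
of the columns into groups (one group per source, given by `σ`) and a tuple
`(R'_s)` with `R'_s ≤ R_s`, there is for each `s` a set of `R'_s` column
indices within group `s` such that the map on causal inputs supported on their
union is injective, iff for each `s` there exist `R'_s` columns of the group
`G_s` whose union over all `s` is linearly independent over `F[z]`. -/
theorem stmt16 {F : Type*} [Field F] {l m : ℕ}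
    (G : Matrix (Fin l) (Fin m) (Polynomial F)) :
    (∀ S : Finset (Fin m),
      ((∀ u v : ℤ → Fin m → F,
          (∀ n : ℤ, n < 0 → u n = 0) → (∀ n : ℤ, n < 0 → v n = 0) →
          (∀ i ∉ S, ∀ n : ℤ, u n i = 0) → (∀ i ∉ S, ∀ n : ℤ, v n i = 0) →
          (∀ n : ℤ, matShift G u n = matShift G v n) → u = v) ↔
        LinearIndependent (Polynomial F) (fun j : {x // x ∈ S} => G.transpose j.val))) ∧
    (∀ r : ℕ, ∀ σ : Fin m → Fin r, ∀ R' : Fin r → ℕ,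
      (∀ s : Fin r, R' s ≤ (Finset.univ.filter (fun j => σ j = s)).card) →
      ((∃ S : Finset (Fin m),
          (∀ s : Fin r, (S.filter (fun j => σ j = s)).card = R' s) ∧
          (∀ u v : ℤ → Fin m → F,
            (∀ n : ℤ, n < 0 → u n = 0) → (∀ n : ℤ, n < 0 → v n = 0) →
            (∀ i ∉ S, ∀ n : ℤ, u n i = 0) → (∀ i ∉ S, ∀ n : ℤ, v n i = 0) →
            (∀ n : ℤ, matShift G u n = matShift G v n) → u = v)) ↔
        (∃ S : Finset (Fin m),
          (∀ s : Fin r, (S.filter (fun j => σ j = s)).card = R' s) ∧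
          LinearIndependent (Polynomial F)
            (fun j : {x // x ∈ S} => G.transpose j.val)))) := by
  classical
  have hms0 : ∀ n : ℤ, matShift G (0 : ℤ → Fin m → F) n = 0 := by
    intro n; funext i; simp [matShift, Polynomial.sum_def]
  have key : ∀ S : Finset (Fin m),
      ((∀ u v : ℤ → Fin m → F,
          (∀ n : ℤ, n < 0 → u n = 0) → (∀ n : ℤ, n < 0 → v n = 0) →
          (∀ i ∉ S, ∀ n : ℤ, u n i = 0) → (∀ i ∉ S, ∀ n : ℤ, v n i = 0) →
          (∀ n : ℤ, matShift G u n = matShift G v n) → u = v) ↔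
        LinearIndependent (Polynomial F) (fun j : {x // x ∈ S} => G.transpose j.val)) := by
    intro S
    constructor
    · -- injectivity implies linear independence
      intro hinj
      by_contra hLI
      obtain ⟨g, hsum, j0, hj0⟩ := Fintype.not_linearIndependent_iff.mp hLI
      set c : Fin m → Polynomial F := fun j => if h : j ∈ S then g ⟨j, h⟩ else 0 with hc
      set N : ℕ := Finset.univ.sup fun j : Fin m => (c j).natDegree with hN
      have hdeg : ∀ j, (c j).natDegree ≤ N := fun j => by
        rw [hN]; exact Finset.le_sup (f := fun j => (c j).natDegree) (Finset.mem_univ j)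
      set u : ℤ → Fin m → F := fun n j =>
        if 0 ≤ (N:ℤ) - n then (c j).coeff ((N:ℤ) - n).toNat else 0 with hu
      have hcausal : ∀ n : ℤ, n < 0 → u n = 0 := by
        intro n hn; funext j
        simp only [hu]
        rw [if_pos (by omega)]
        have : (c j).natDegree < ((N:ℤ) - n).toNat := by have := hdeg j; omega
        simp [Polynomial.coeff_eq_zero_of_natDegree_lt this]
      have hsupp : ∀ i ∉ S, ∀ n : ℤ, u n i = 0 := by
        intro i hi n
        simp only [hu, hc]
        rw [dif_neg hi]
        simp
      have hci : ∀ i : Fin l, (∑ j : Fin m, G i j * c j) = 0 := by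
        intro i
        have h1 := congrFun hsum i
        simp only [Finset.sum_apply, Pi.smul_apply, Matrix.transpose_apply, smul_eq_mul,
          Pi.zero_apply] at h1
        calc ∑ j : Fin m, G i j * c j = ∑ j ∈ S, G i j * c j := by
              refine (Finset.sum_subset (Finset.subset_univ S) fun j _ hj => ?_).symm
              simp only [hc]
              rw [dif_neg hj, mul_zero]
          _ = ∑ j : {x // x ∈ S}, G i j.val * c j.val :=
              Finset.sum_subtype S (fun x => Iff.rfl) (fun j => G i j * c j)
          _ = ∑ j : {x // x ∈ S}, g j • G i j.val := by
              refine Finset.sum_congr rfl fun j _ => ?_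
              simp only [hc]
              rw [dif_pos j.prop, Subtype.coe_eta, smul_eq_mul, mul_comm]
          _ = 0 := h1
      have hms : ∀ n : ℤ, matShift G u n = 0 := by
        intro n; funext i
        have huval : ∀ (j : Fin m) (k : ℕ), u (n + k) j
            = (if (k:ℤ) ≤ (N:ℤ) - n then (c j).coeff (((N:ℤ) - n) - k).toNat else 0) := by
          intro j k
          simp only [hu]
          by_cases h : (k:ℤ) ≤ (N:ℤ) - n
          · rw [if_pos (by omega), if_pos h]
            congr 1
            omega
          · rw [if_neg (by omega), if_neg h]
        show (∑ j, (G i j).sum fun k a => a * u (n + k) j) = (0 : Fin l → F) i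
        rw [Pi.zero_apply]
        calc (∑ j, (G i j).sum fun k a => a * u (n + k) j)
            = ∑ j, (G i j).sum fun k a =>
                a * (if (k:ℤ) ≤ (N:ℤ) - n then (c j).coeff (((N:ℤ) - n) - k).toNat else 0) := by
              refine Finset.sum_congr rfl fun j _ => ?_
              rw [Polynomial.sum_def, Polynomial.sum_def]
              exact Finset.sum_congr rfl fun k _ => by rw [huval j k]
          _ = ∑ j, (if (0:ℤ) ≤ (N:ℤ) - n then (G i j * c j).coeff ((N:ℤ) - n).toNat else 0) :=
              Finset.sum_congr rfl fun j _ => sum_coeff_shift (G i j) (c j) ((N:ℤ) - n)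
          _ = 0 := by
              by_cases h : (0:ℤ) ≤ (N:ℤ) - n
              · simp only [if_pos h]
                rw [← Polynomial.finset_sum_coeff, hci i]
                simp
              · exact Finset.sum_eq_zero fun j _ => if_neg h
      have hueq : u = 0 := hinj u 0 hcausal (fun n _ => rfl) hsupp (fun i _ n => rfl)
        (fun n => by rw [hms n, hms0 n])
      have hne : u ((N:ℤ) - (c j0.val).natDegree) j0.val ≠ 0 := by
        have hj0' : c j0.val = g j0 := by
          simp only [hc]
          rw [dif_pos j0.prop, Subtype.coe_eta]
        simp only [hu]
        rw [if_pos (by have := hdeg j0.val; omega)]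
        rw [show (((N:ℤ) - ((N:ℤ) - ((c j0.val).natDegree : ℤ)))).toNat
            = (c j0.val).natDegree by omega]
        have hcne : c j0.val ≠ 0 := by rw [hj0']; exact hj0
        exact fun h => hcne (Polynomial.leadingCoeff_eq_zero.mp h)
      rw [hueq] at hne
      exact hne rfl
    · -- linear independence implies injectivity
      intro hLI u v hcu hcv hsu hsv heq
      set w : ℤ → Fin m → F := fun n j => u n j - v n j with hw
      have hwc : ∀ n : ℤ, n < 0 → ∀ j, w n j = 0 := by
        intro n hn j
        simp [hw, congrFun (hcu n hn) j, congrFun (hcv n hn) j]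
      have hws : ∀ j ∉ S, ∀ n : ℤ, w n j = 0 := by
        intro j hj n
        simp [hw, hsu j hj n, hsv j hj n]
      have hw0 : ∀ (n : ℤ) (i : Fin l),
          (∑ j : Fin m, (G i j).sum fun k a => a * w (n + k) j) = 0 := by
        intro n i
        have h := congrFun (heq n) i
        simp only [matShift] at h
        have hsplit : ∀ j : Fin m, ((G i j).sum fun k a => a * w (n+k) j)
            = ((G i j).sum fun k a => a * u (n+k) j)
              - ((G i j).sum fun k a => a * v (n+k) j) := by
          intro j
          rw [Polynomial.sum_def, Polynomial.sum_def, Polynomial.sum_def,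
            ← Finset.sum_sub_distrib]
          exact Finset.sum_congr rfl fun k _ => by simp [hw, mul_sub]
        simp only [hsplit]
        rw [Finset.sum_sub_distrib, h, sub_self]
      set P : Fin m → LaurentSeries F :=
        fun j => HahnSeries.ofPowerSeries ℤ F (PowerSeries.mk fun n => w n j) with hP
      have hPcoeff : ∀ (j : Fin m) (d : ℤ), (P j).coeff d = w d j := by
        intro j d
        by_cases hd : 0 ≤ d
        · obtain ⟨n, rfl⟩ : ∃ n : ℕ, d = (n:ℤ) := ⟨d.toNat, (Int.toNat_of_nonneg hd).symm⟩
          simp only [hP]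
          rw [HahnSeries.ofPowerSeries_apply_coeff]
          simp
        · push_neg at hd
          rw [hwc d (by omega) j]
          simp only [hP, HahnSeries.ofPowerSeries_apply]
          rw [HahnSeries.embDomain_notin_range]
          rintro ⟨k, hk⟩
          change ((k:ℕ):ℤ) = d at hk
          omega
      have hP0 : ∀ j ∉ S, P j = 0 := by
        intro j hj
        ext d
        rw [hPcoeff, hws j hj d, HahnSeries.coeff_zero]
      have hLIK := li_map_field (aeval (tK F)).toRingHom aeval_tK_injective
        (fun j : {x // x ∈ S} => G.transpose j.val) hLI
      have hrel : (∑ j : {x // x ∈ S},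
          P j.val • fun i => (aeval (tK F)).toRingHom (G.transpose j.val i)) = 0 := by
        funext i
        simp only [Finset.sum_apply, Pi.smul_apply, smul_eq_mul, Pi.zero_apply,
          Matrix.transpose_apply, AlgHom.toRingHom_eq_coe, RingHom.coe_coe]
        calc (∑ j : {x // x ∈ S}, P j.val * (aeval (tK F)) (G i j.val))
            = ∑ j ∈ S, P j * (aeval (tK F)) (G i j) :=
              (Finset.sum_subtype S (fun x => Iff.rfl) (fun j => P j * (aeval (tK F)) (G i j))).symm
          _ = ∑ j : Fin m, P j * (aeval (tK F)) (G i j) := by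
              refine Finset.sum_subset (Finset.subset_univ S) fun j _ hj => ?_
              rw [hP0 j hj, zero_mul]
          _ = 0 := by
              ext d
              rw [hahn_coeff_sum, HahnSeries.coeff_zero]
              calc (∑ j : Fin m, (P j * (aeval (tK F)) (G i j)).coeff d)
                  = ∑ j : Fin m, ((G i j).sum fun e a => a * w (d + e) j) := by
                    refine Finset.sum_congr rfl fun j _ => ?_
                    rw [mul_comm, aeval_tK_mul_coeff]
                    rw [Polynomial.sum_def, Polynomial.sum_def]
                    exact Finset.sum_congr rfl fun e _ => by rw [hPcoeff]
                _ = 0 := hw0 d i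
      have hPz := Fintype.linearIndependent_iff.mp hLIK (fun j => P j.val) hrel
      have hwz : ∀ (n : ℤ) (j : Fin m), w n j = 0 := by
        intro n j
        by_cases hj : j ∈ S
        · rw [← hPcoeff j n, show P j = 0 from hPz ⟨j, hj⟩, HahnSeries.coeff_zero]
        · exact hws j hj n
      funext n j
      have := hwz n j
      simp only [hw] at this
      exact sub_eq_zero.mp this
  refine ⟨key, fun r σ R' _ => exists_congr fun S => and_congr_right fun _ => key S⟩
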